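/- Normalization of the alternative death process representation: for θ > 0 and t > 0, with λ_k = k(θ + k − 1)/2, the transition probabilities d_m^θ(t) for m ≥ 0 given by d_m^θ(t) = Σ_{k ≥ m} e^{−λ_k t} (−1)^{k−m} C(k,m) (θ + 2k − 1)(θ + m)_{(k−1)} / k! for m ≥ 1, and d_0^θ(t) = 1 − Σ_{k ≥ 1} e^{−λ_k t}(−1)^{k−1}(θ + 2k − 1)(θ)_{(k−1)}/k!, satisfy Σ_{m ≥ 0} d_m^θ(t) = 1 (with all series absolutely convergent for t > 0). -/

import Mathlib

open Finset Filter

/-- The death process rates `λ_k = k(θ + k - 1)/2`. -/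
noncomputable def deathRate (θ : ℝ) (k : ℕ) : ℝ := k * (θ + k - 1) / 2

/-- The `k`-th term of the series defining `d_m^θ(t)` for `m ≥ 1`. -/
noncomputable def dTerm (θ t : ℝ) (m k : ℕ) : ℝ :=
  if m ≤ k then
    Real.exp (-(deathRate θ k) * t) * (-1 : ℝ) ^ (k - m) * (k.choose m) *
      (θ + 2 * k - 1) * (∏ i ∈ Finset.range (k - 1), (θ + m + i)) / (k.factorial)
  else 0

/-- The `k`-th term of the series defining `1 - d_0^θ(t)`. -/
noncomputable def dTerm0 (θ t : ℝ) (k : ℕ) : ℝ :=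
  if 1 ≤ k then
    Real.exp (-(deathRate θ k) * t) * (-1 : ℝ) ^ (k - 1) *
      (θ + 2 * k - 1) * (∏ i ∈ Finset.range (k - 1), (θ + i)) / (k.factorial)
  else 0

/-- The transition probabilities `d_m^θ(t)` of the block-counting death process of
Kingman's coalescent with mutation, started at infinity. -/
noncomputable def dFV (θ t : ℝ) (m : ℕ) : ℝ :=
  if m = 0 then 1 - ∑' k : ℕ, dTerm0 θ t k else ∑' k : ℕ, dTerm θ t m k

lemma stepFD (k : ℕ) (f : ℕ → ℝ) :
    ∑ m ∈ range (k+2), (-1:ℝ)^m * ((k+1).choose m) * f m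
      = ∑ m ∈ range (k+1), (-1:ℝ)^m * (k.choose m) * (f m - f (m+1)) := by
  have hS' : ∑ m ∈ range (k+1), (-1:ℝ)^m * (k.choose m) * f m
      = ∑ m ∈ range k, (-1:ℝ)^(m+1) * (k.choose (m+1)) * f (m+1) + (-1:ℝ)^0 * (k.choose 0) * f 0 :=
    Finset.sum_range_succ' (fun m => (-1:ℝ)^m * (k.choose m) * f m) k
  have hneg : ∑ m ∈ range k, (-1:ℝ)^(m+1) * (k.choose (m+1)) * f (m+1)
      = -∑ m ∈ range k, (-1:ℝ)^m * (k.choose (m+1)) * f (m+1) := by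
    rw [← Finset.sum_neg_distrib]
    exact Finset.sum_congr rfl fun m _ => by ring
  have h2 : ∑ m ∈ range (k+1), (-1:ℝ)^m * (k.choose (m+1)) * f (m+1)
      = ∑ m ∈ range k, (-1:ℝ)^m * (k.choose (m+1)) * f (m+1) := by
    rw [Finset.sum_range_succ, Nat.choose_succ_self]
    simp
  have hL : ∑ m ∈ range (k+2), (-1:ℝ)^m * ((k+1).choose m) * f m
      = ∑ m ∈ range (k+1), (-1:ℝ)^(m+1) * ((k+1).choose (m+1)) * f (m+1)
        + (-1:ℝ)^0 * ((k+1).choose 0) * f 0 :=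
    Finset.sum_range_succ' (fun m => (-1:ℝ)^m * ((k+1).choose m) * f m) (k+1)
  have h1 : ∑ m ∈ range (k+1), (-1:ℝ)^(m+1) * ((k+1).choose (m+1)) * f (m+1)
      = ∑ m ∈ range (k+1), (-((-1:ℝ)^m * (k.choose m) * f (m+1))
          - (-1:ℝ)^m * (k.choose (m+1)) * f (m+1)) := by
    refine Finset.sum_congr rfl fun m _ => ?_
    rw [Nat.choose_succ_succ]
    push_cast
    ring
  rw [hL, h1, Finset.sum_sub_distrib, Finset.sum_neg_distrib, h2]
  have h4 : ∑ m ∈ range k, (-1:ℝ)^m * (k.choose (m+1)) * f (m+1)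
      = (-1:ℝ)^0 * (k.choose 0) * f 0 - ∑ m ∈ range (k+1), (-1:ℝ)^m * (k.choose m) * f m := by
    rw [hS', hneg]; ring
  rw [h4]
  have hR : ∑ m ∈ range (k+1), (-1:ℝ)^m * (k.choose m) * (f m - f (m+1))
      = ∑ m ∈ range (k+1), (-1:ℝ)^m * (k.choose m) * f m
        - ∑ m ∈ range (k+1), (-1:ℝ)^m * (k.choose m) * f (m+1) := by
    rw [← Finset.sum_sub_distrib]
    exact Finset.sum_congr rfl fun m _ => by ring
  rw [hR]
  simp
  ring

lemma keyFD : ∀ (k n : ℕ), n < k → ∀ c : ℝ,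
    ∑ m ∈ range (k+1), (-1:ℝ)^m * (k.choose m) * ∏ i ∈ range n, (c + m + i) = 0 := by
  intro k
  induction k with
  | zero => intro n hn; omega
  | succ k ih =>
    intro n hn c
    rw [show k + 1 + 1 = k + 2 from rfl, stepFD k (fun m => ∏ i ∈ range n, (c + m + i))]
    rcases n with _ | n'
    · simp
    · have hdiff : ∀ m : ℕ, (∏ i ∈ range (n'+1), (c + m + i)) - ∏ i ∈ range (n'+1), (c + (m+1:ℕ) + i)
          = -((n' : ℝ) + 1) * ∏ i ∈ range n', ((c+1) + m + i) := by
        intro m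
        have e1 : (∏ i ∈ range (n'+1), (c + m + i))
            = (∏ i ∈ range n', (c + m + (i+1:ℕ))) * (c + m + (0:ℕ)) :=
          Finset.prod_range_succ' (fun i => c + m + i) n'
        have e2 : (∏ i ∈ range (n'+1), (c + (m+1:ℕ) + i))
            = (∏ i ∈ range n', (c + (m+1:ℕ) + i)) * (c + (m+1:ℕ) + n') :=
          Finset.prod_range_succ (fun i => c + (m+1:ℕ) + i) n'
        have e3 : ∀ i ∈ range n', c + m + ((i+1:ℕ):ℝ) = (c+1) + m + i := by
          intro i _; push_cast; ring
        have e4 : ∀ i ∈ range n', c + ((m+1:ℕ):ℝ) + i = (c+1) + m + i := by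
          intro i _; push_cast; ring
        rw [e1, e2, Finset.prod_congr rfl e3, Finset.prod_congr rfl e4]
        push_cast
        ring
      have : ∑ m ∈ range (k+1), (-1:ℝ)^m * (k.choose m) *
          ((∏ i ∈ range (n'+1), (c + m + i)) - ∏ i ∈ range (n'+1), (c + ((m+1:ℕ):ℝ) + i))
          = -((n':ℝ)+1) * ∑ m ∈ range (k+1), (-1:ℝ)^m * (k.choose m) * ∏ i ∈ range n', ((c+1) + m + i) := by
        rw [Finset.mul_sum]
        refine Finset.sum_congr rfl fun m _ => ?_
        rw [hdiff m]
        ring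
      rw [this, ih n' (by omega) (c+1), mul_zero]

lemma sumIdent (θ t : ℝ) (k : ℕ) :
    ∑ m ∈ range k, dTerm θ t (m+1) k = dTerm0 θ t k := by
  rcases k with _ | j
  · simp [dTerm0]
  · have hkey := keyFD (j+1) j (by omega) θ
    rw [Finset.sum_range_succ'
      (fun m => (-1:ℝ)^m * ((j+1).choose m) * ∏ i ∈ range j, (θ + m + i)) (j+1)] at hkey
    simp only [pow_zero, Nat.choose_zero_right, Nat.cast_zero, Nat.cast_one, one_mul,
      add_zero] at hkey
    have hkey2 : ∑ m ∈ range (j+1), (-1:ℝ)^(m+1) * ((j+1).choose (m+1)) *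
        ∏ i ∈ range j, (θ + ((m+1:ℕ):ℝ) + i) = -∏ i ∈ range j, (θ + (i:ℝ)) := by
      have h0 : ∏ i ∈ range j, (θ + ((0:ℕ):ℝ) + i) = ∏ i ∈ range j, (θ + (i:ℝ)) := by
        refine Finset.prod_congr rfl fun i _ => by push_cast; ring
      linarith [hkey, h0.le]
    set E := Real.exp (-(deathRate θ (j+1)) * t) with hE
    have hterm : ∀ m ∈ range (j+1), dTerm θ t (m+1) (j+1)
        = (E * (θ + 2*((j+1:ℕ):ℝ) - 1) / ((j+1).factorial : ℝ)) *
          ((-1:ℝ)^j * -((-1:ℝ)^(m+1) * (((j+1).choose (m+1) : ℕ):ℝ) *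
            ∏ i ∈ range j, (θ + ((m+1:ℕ):ℝ) + i))) := by
      intro m hm
      have hm' : m ≤ j := by simpa [Nat.lt_succ_iff] using Finset.mem_range.mp hm
      rw [dTerm, if_pos (by omega : m + 1 ≤ j + 1)]
      have e1 : j + 1 - (m+1) = j - m := by omega
      have h2 : ((-1:ℝ))^m * ((-1:ℝ))^m = 1 := by
        rw [← pow_add]; exact Even.neg_one_pow ⟨m, rfl⟩
      have h3 : ((-1:ℝ))^(j-m) * (-1:ℝ)^m = (-1:ℝ)^j := by
        rw [← pow_add, show j-m+m = j from by omega]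
      have hpow : ((-1:ℝ))^(j-m) = (-1:ℝ)^j * (-1:ℝ)^m := by
        rw [← h3, mul_assoc, h2, mul_one]
      rw [e1, hpow, show j + 1 - 1 = j from rfl]
      push_cast
      ring
    rw [Finset.sum_congr rfl hterm, ← Finset.mul_sum]
    have h5 : ∑ m ∈ range (j+1), ((-1:ℝ)^j * -((-1:ℝ)^(m+1) * (((j+1).choose (m+1) : ℕ):ℝ) *
        ∏ i ∈ range j, (θ + ((m+1:ℕ):ℝ) + i)))
        = (-1:ℝ)^j * ∏ i ∈ range j, (θ + (i:ℝ)) := by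
      rw [← Finset.mul_sum]
      have h6 : ∑ m ∈ range (j+1), -((-1:ℝ)^(m+1) * (((j+1).choose (m+1) : ℕ):ℝ) *
          ∏ i ∈ range j, (θ + ((m+1:ℕ):ℝ) + i)) = ∏ i ∈ range j, (θ + (i:ℝ)) := by
        rw [Finset.sum_neg_distrib, hkey2, neg_neg]
      rw [h6]
    rw [h5, dTerm0, if_pos (by omega : 1 ≤ j + 1), show j + 1 - 1 = j from rfl]
    push_cast
    ring

noncomputable def Bt (θ t : ℝ) (k : ℕ) : ℝ :=
  Real.exp (-(deathRate θ k) * t) * 2^k * (θ + 2*k) *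
    (∏ i ∈ Finset.range k, (θ + k + i)) / k.factorial

noncomputable def Bb (θ t : ℝ) (k : ℕ) : ℝ := (k+1) * Bt θ t k

lemma Bt_pos {θ : ℝ} (t : ℝ) (hθ : 0 < θ) (k : ℕ) : 0 < Bt θ t k := by
  have hP : 0 < ∏ i ∈ Finset.range k, (θ + k + i) :=
    Finset.prod_pos fun i _ => by positivity
  have h2 : (0:ℝ) < θ + 2*k := by positivity
  have hf : (0:ℝ) < k.factorial := by positivity
  unfold Bt
  positivity

lemma Bb_pos {θ : ℝ} (t : ℝ) (hθ : 0 < θ) (k : ℕ) : 0 < Bb θ t k := by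
  unfold Bb
  have := Bt_pos t hθ k
  positivity

lemma choose_le_two_pow_real (k m : ℕ) : ((k.choose m : ℕ) : ℝ) ≤ 2^k := by
  have h : k.choose m ≤ 2^k := by
    rcases le_or_gt m k with h | h
    · calc k.choose m ≤ ∑ i ∈ range (k+1), k.choose i :=
            Finset.single_le_sum (fun i _ => Nat.zero_le _) (Finset.mem_range.2 (by omega))
        _ = 2^k := Nat.sum_range_choose k
    · simp [Nat.choose_eq_zero_of_lt h]
  calc ((k.choose m : ℕ) : ℝ) ≤ ((2^k : ℕ) : ℝ) := by exact_mod_cast h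
    _ = 2^k := by push_cast; ring

lemma prod_shift_le {θ : ℝ} (hθ : 0 < θ) (m k : ℕ) (hm : m ≤ k) (hk : 1 ≤ k) :
    ∏ i ∈ Finset.range (k-1), (θ + m + i) ≤ ∏ i ∈ Finset.range k, (θ + k + i) := by
  obtain ⟨j, rfl⟩ : ∃ j, k = j + 1 := ⟨k - 1, by omega⟩
  have h1 : ∏ i ∈ Finset.range j, (θ + m + i) ≤ ∏ i ∈ Finset.range j, (θ + (j+1:ℕ) + i) := by
    refine Finset.prod_le_prod (fun i _ => by positivity) (fun i _ => ?_)
    have : (m:ℝ) ≤ ((j+1:ℕ):ℝ) := by exact_mod_cast hm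
    linarith
  have h2 : ∏ i ∈ Finset.range (j+1), (θ + (j+1:ℕ) + i)
      = (∏ i ∈ Finset.range j, (θ + (j+1:ℕ) + i)) * (θ + (j+1:ℕ) + j) :=
    Finset.prod_range_succ _ j
  have h3 : (1:ℝ) ≤ θ + (j+1:ℕ) + j := by
    have : (0:ℝ) ≤ j := Nat.cast_nonneg j
    push_cast
    linarith
  have h4 : (0:ℝ) ≤ ∏ i ∈ Finset.range j, (θ + (j+1:ℕ) + i) :=
    Finset.prod_nonneg fun i _ => by positivity
  calc ∏ i ∈ Finset.range ((j+1)-1), (θ + m + i)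
      = ∏ i ∈ Finset.range j, (θ + m + i) := by norm_num
    _ ≤ ∏ i ∈ Finset.range j, (θ + (j+1:ℕ) + i) := h1
    _ ≤ (∏ i ∈ Finset.range j, (θ + (j+1:ℕ) + i)) * (θ + (j+1:ℕ) + j) :=
        le_mul_of_one_le_right h4 h3
    _ = ∏ i ∈ Finset.range (j+1), (θ + (j+1:ℕ) + i) := h2.symm

lemma abs_dTerm_le {θ : ℝ} (t : ℝ) (hθ : 0 < θ) (m k : ℕ) (hm : 1 ≤ m) :
    |dTerm θ t m k| ≤ Bt θ t k := by
  rw [dTerm]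
  split_ifs with h
  · have hk : 1 ≤ k := le_trans hm h
    have hA : (0:ℝ) ≤ θ + 2*k - 1 := by
      have : (1:ℝ) ≤ k := by exact_mod_cast hk
      linarith
    have hP : (0:ℝ) ≤ ∏ i ∈ Finset.range (k-1), (θ + m + i) :=
      Finset.prod_nonneg fun i _ => by positivity
    rw [abs_div, abs_mul, abs_mul, abs_mul, abs_mul, Real.abs_exp, abs_pow, abs_neg, abs_one,
      one_pow, mul_one, Nat.abs_cast, Nat.abs_cast, abs_of_nonneg hA, abs_of_nonneg hP]
    unfold Bt
    have hC := choose_le_two_pow_real k m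
    have hPP := prod_shift_le hθ m k h hk
    have hA2 : θ + 2*(k:ℝ) - 1 ≤ θ + 2*k := by linarith
    have hf : (0:ℝ) < k.factorial := by positivity
    gcongr
  · rw [abs_zero]
    exact (Bt_pos t hθ k).le

lemma abs_dTerm0_le {θ : ℝ} (t : ℝ) (hθ : 0 < θ) (k : ℕ) :
    |dTerm0 θ t k| ≤ Bt θ t k := by
  rw [dTerm0]
  split_ifs with h
  · have hA : (0:ℝ) ≤ θ + 2*k - 1 := by
      have : (1:ℝ) ≤ k := by exact_mod_cast h
      linarith
    have hP : (0:ℝ) ≤ ∏ i ∈ Finset.range (k-1), (θ + i) :=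
      Finset.prod_nonneg fun i _ => by positivity
    rw [abs_div, abs_mul, abs_mul, abs_mul, Real.abs_exp, abs_pow, abs_neg, abs_one,
      one_pow, mul_one, Nat.abs_cast, abs_of_nonneg hA, abs_of_nonneg hP]
    unfold Bt
    have hPP : ∏ i ∈ Finset.range (k-1), (θ + (i:ℝ)) ≤ ∏ i ∈ Finset.range k, (θ + k + i) := by
      have := prod_shift_le hθ 0 k (Nat.zero_le k) h
      simpa using this
    have hA2 : θ + 2*(k:ℝ) - 1 ≤ θ + 2*k := by linarith
    have hf : (0:ℝ) < k.factorial := by positivity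
    have h2 : (1:ℝ) ≤ 2^k := one_le_pow₀ (by norm_num)
    calc Real.exp (-(deathRate θ k)*t) * (θ + 2*k - 1) * (∏ i ∈ Finset.range (k-1), (θ + i))
          / k.factorial
        ≤ Real.exp (-(deathRate θ k)*t) * 1 * (θ + 2*k) * (∏ i ∈ Finset.range k, (θ + k + i))
          / k.factorial := by
          rw [mul_one]
          gcongr
      _ ≤ Real.exp (-(deathRate θ k)*t) * 2^k * (θ + 2*k) * (∏ i ∈ Finset.range k, (θ + k + i))
          / k.factorial := by
          have hPk : (0:ℝ) ≤ ∏ i ∈ Finset.range k, (θ + k + i) :=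
            Finset.prod_nonneg fun i _ => by positivity
          gcongr
  · rw [abs_zero]
    exact (Bt_pos t hθ k).le

lemma exp_step (θ t : ℝ) (k : ℕ) :
    Real.exp (-(deathRate θ (k+1)) * t)
      = Real.exp (-(deathRate θ k) * t) * Real.exp (-((θ + 2*k)/2) * t) := by
  rw [← Real.exp_add]
  congr 1
  unfold deathRate
  push_cast
  ring

lemma prod_step (θ : ℝ) (k : ℕ) :
    (θ + k) * ∏ i ∈ Finset.range (k+1), (θ + ((k+1:ℕ):ℝ) + i)
      = (∏ i ∈ Finset.range k, (θ + k + i)) * ((θ + 2*k) * (θ + 2*k + 1)) := by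
  have a : ∏ i ∈ Finset.range (k+2), (θ + (k:ℝ) + i)
      = (∏ i ∈ Finset.range (k+1), (θ + (k:ℝ) + ((i+1:ℕ):ℝ))) * (θ + (k:ℝ) + ((0:ℕ):ℝ)) :=
    Finset.prod_range_succ' (fun i => θ + (k:ℝ) + i) (k+1)
  have b : ∏ i ∈ Finset.range (k+2), (θ + (k:ℝ) + i)
      = ((∏ i ∈ Finset.range k, (θ + (k:ℝ) + i)) * (θ + (k:ℝ) + k)) * (θ + (k:ℝ) + ((k+1:ℕ):ℝ)) := by
    rw [Finset.prod_range_succ (fun i => θ + (k:ℝ) + i) (k+1),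
      Finset.prod_range_succ (fun i => θ + (k:ℝ) + i) k]
  have c : ∏ i ∈ Finset.range (k+1), (θ + (k:ℝ) + ((i+1:ℕ):ℝ))
      = ∏ i ∈ Finset.range (k+1), (θ + ((k+1:ℕ):ℝ) + i) :=
    Finset.prod_congr rfl fun i _ => by push_cast; ring
  rw [c] at a
  rw [a] at b
  push_cast at b ⊢
  nlinarith [b]

lemma ratio_step {θ t : ℝ} (hθ : 0 < θ) (k : ℕ)
    (hsmall : Real.exp (-((θ + 2*k)/2) * t) * (4*(θ + 2*k + 2)*(θ + 2*k + 1)) ≤ θ/2) :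
    Bb θ t (k+1) ≤ (1/2) * Bb θ t k := by
  have hk0 : (0:ℝ) ≤ k := Nat.cast_nonneg k
  set E := Real.exp (-(deathRate θ k) * t) with hE
  set ε := Real.exp (-((θ + 2*k)/2) * t) with hε
  set P := ∏ i ∈ Finset.range k, (θ + (k:ℝ) + i) with hP
  set Q := ∏ i ∈ Finset.range (k+1), (θ + ((k+1:ℕ):ℝ) + i) with hQ
  have hPpos : 0 < P := Finset.prod_pos fun i _ => by positivity
  have hQrel : (θ + k) * Q = P * ((θ + 2*k) * (θ + 2*k + 1)) := prod_step θ k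
  have hθk : (0:ℝ) < θ + k := by linarith
  have hF : (0:ℝ) < (k.factorial : ℝ) := by positivity
  have hεpos : 0 < ε := Real.exp_pos _
  have hEpos : 0 < E := Real.exp_pos _
  set M : ℝ := E * 2^k * P / ((k.factorial : ℝ) * ((k:ℝ)+1) * (θ + k)) with hM
  have hMpos : 0 < M := by positivity
  have hLHS : Bb θ t (k+1) = M * (ε * (2*((k:ℝ)+2)*(θ+2*k+2)*(θ+2*k+1)*(θ+2*k))) := by
    unfold Bb Bt
    rw [exp_step θ t k, ← hE, ← hε, ← hQ]
    have hQ2 : Q = P * ((θ + 2*k) * (θ + 2*k + 1)) / (θ + k) :=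
      eq_div_iff (ne_of_gt hθk) |>.mpr (by linarith [hQrel])
    rw [hQ2, hM, Nat.factorial_succ]
    push_cast
    field_simp
    ring
  have hRHS : (1/2) * Bb θ t k = M * ((1/2) * (((k:ℝ)+1)^2 * (θ+k)) * (θ+2*k)) := by
    unfold Bb Bt
    rw [← hE, ← hP, hM]
    field_simp
  rw [hLHS, hRHS]
  apply mul_le_mul_of_nonneg_left _ hMpos.le
  have h1 : (0:ℝ) ≤ ((k:ℝ)+2)/2 := by positivity
  have h2 := mul_le_mul_of_nonneg_left hsmall h1
  have h3 : (0:ℝ) ≤ θ + 2*k := by linarith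
  nlinarith [h2, mul_nonneg hk0 hθ.le, mul_nonneg (mul_nonneg hk0 hk0) hθ.le,
    mul_nonneg (mul_nonneg hk0 hk0) hk0, mul_nonneg hk0 hk0,
    mul_le_mul_of_nonneg_right h2 h3, mul_nonneg (mul_nonneg hk0 hk0) h3,
    mul_nonneg (mul_nonneg (mul_nonneg hk0 hk0) hk0) hθ.le]

lemma small_eventually {θ t : ℝ} (hθ : 0 < θ) (ht : 0 < t) :
    ∀ᶠ k : ℕ in atTop,
      Real.exp (-((θ + 2*k)/2) * t) * (4*(θ + 2*k + 2)*(θ + 2*k + 1)) ≤ θ/2 := by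
  have key : Tendsto (fun k : ℕ =>
      Real.exp (-((θ + 2*(k:ℝ))/2) * t) * (4*(θ + 2*(k:ℝ) + 2)*(θ + 2*(k:ℝ) + 1)))
      atTop (nhds 0) := by
    have h1 : Tendsto (fun x : ℝ => x^2 * Real.exp (-x)) atTop (nhds 0) :=
      Real.tendsto_pow_mul_exp_neg_atTop_nhds_zero 2
    have h2 : Tendsto (fun k : ℕ => (t/2) * (θ + 2*(k:ℝ) + 2)) atTop atTop := by
      apply Tendsto.const_mul_atTop (by positivity : (0:ℝ) < t/2)
      have := (tendsto_natCast_atTop_atTop (R := ℝ)).const_mul_atTop (by norm_num : (0:ℝ) < 2)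
      have h' := tendsto_atTop_add_const_right atTop (θ + 2) this
      refine h'.congr fun k => by ring
    have h3 := h1.comp h2
    have h4 := h3.const_mul ((4*Real.exp t)*(2/t)^2)
    rw [mul_zero] at h4
    have hg : Tendsto (fun k : ℕ =>
        (4*Real.exp t) * ((θ + 2*(k:ℝ) + 2)^2 * Real.exp (-((t/2)*(θ + 2*(k:ℝ) + 2)))))
        atTop (nhds 0) := by
      refine h4.congr fun k => ?_
      simp only [Function.comp]
      field_simp
    refine squeeze_zero (fun k => ?_) (fun k => ?_) hg
    · have hx : (0:ℝ) ≤ 4*(θ + 2*(k:ℝ) + 2)*(θ + 2*(k:ℝ) + 1) := by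
        have : (0:ℝ) ≤ (k:ℝ) := Nat.cast_nonneg k
        positivity
      exact mul_nonneg (Real.exp_nonneg _) hx
    · have hk0 : (0:ℝ) ≤ k := Nat.cast_nonneg k
      have hexp : Real.exp (-((θ + 2*(k:ℝ))/2) * t)
          = Real.exp t * Real.exp (-((t/2)*(θ + 2*(k:ℝ) + 2))) := by
        rw [← Real.exp_add]
        congr 1
        ring
      rw [hexp]
      have hfac : 4*(θ + 2*(k:ℝ) + 2)*(θ + 2*(k:ℝ) + 1) ≤ 4*(θ + 2*(k:ℝ) + 2)^2 := by
        nlinarith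
      calc Real.exp t * Real.exp (-((t/2)*(θ + 2*(k:ℝ) + 2))) *
            (4*(θ + 2*(k:ℝ) + 2)*(θ + 2*(k:ℝ) + 1))
          ≤ Real.exp t * Real.exp (-((t/2)*(θ + 2*(k:ℝ) + 2))) * (4*(θ + 2*(k:ℝ) + 2)^2) := by
            have : (0:ℝ) ≤ Real.exp t * Real.exp (-((t/2)*(θ + 2*(k:ℝ) + 2))) := by positivity
            exact mul_le_mul_of_nonneg_left hfac this
        _ = (4*Real.exp t) * ((θ + 2*(k:ℝ) + 2)^2 * Real.exp (-((t/2)*(θ + 2*(k:ℝ) + 2)))) := by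
            ring
  exact key.eventually_le_const (by positivity : (0:ℝ) < θ/2)

lemma summable_Bb {θ t : ℝ} (hθ : 0 < θ) (ht : 0 < t) : Summable (Bb θ t) := by
  refine summable_of_ratio_norm_eventually_le (by norm_num : (1/2:ℝ) < 1) ?_
  filter_upwards [small_eventually hθ ht] with k hk
  rw [Real.norm_eq_abs, Real.norm_eq_abs, abs_of_nonneg (Bb_pos t hθ (k+1)).le,
    abs_of_nonneg (Bb_pos t hθ k).le]
  exact ratio_step hθ k hk

theorem dFV_sums_to_one (θ t : ℝ) (hθ : 0 < θ) (ht : 0 < t) :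
    (∀ m : ℕ, 1 ≤ m → Summable fun k : ℕ => |dTerm θ t m k|) ∧
    (Summable fun k : ℕ => |dTerm0 θ t k|) ∧
    (Summable fun m : ℕ => dFV θ t m) ∧
    ∑' m : ℕ, dFV θ t m = 1 := by
  have hBt : Summable (Bt θ t) := by
    refine (summable_Bb hθ ht).of_nonneg_of_le (fun k => (Bt_pos t hθ k).le) (fun k => ?_)
    have h1 : (1:ℝ) ≤ (k:ℝ) + 1 := by linarith [Nat.cast_nonneg (α := ℝ) k]
    exact le_mul_of_one_le_left (Bt_pos t hθ k).le h1
  have part1 : ∀ m : ℕ, 1 ≤ m → Summable fun k : ℕ => |dTerm θ t m k| := fun m hm =>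
    hBt.of_nonneg_of_le (fun k => abs_nonneg _) (fun k => abs_dTerm_le t hθ m k hm)
  have part2 : Summable fun k : ℕ => |dTerm0 θ t k| :=
    hBt.of_nonneg_of_le (fun k => abs_nonneg _) (fun k => abs_dTerm0_le t hθ k)
  have hvan : ∀ k m : ℕ, k ≤ m → dTerm θ t (m+1) k = 0 := fun k m h =>
    if_neg (by omega)
  have hfib : ∀ k, Summable (fun m : ℕ => |dTerm θ t (m+1) k|) := fun k =>
    summable_of_ne_finset_zero (s := Finset.range k) (fun m hm => by
      rw [hvan k m (by simpa using hm), abs_zero])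
  have hfibsum : ∀ k, ∑' m : ℕ, |dTerm θ t (m+1) k| ≤ Bb θ t k := by
    intro k
    rw [tsum_eq_sum (s := Finset.range k) (fun m hm => by
      rw [hvan k m (by simpa using hm), abs_zero])]
    calc ∑ m ∈ range k, |dTerm θ t (m+1) k|
        ≤ ∑ m ∈ range k, Bt θ t k :=
          Finset.sum_le_sum fun m _ => abs_dTerm_le t hθ (m+1) k (by omega)
      _ = (k:ℝ) * Bt θ t k := by
          rw [Finset.sum_const, Finset.card_range, nsmul_eq_mul]
      _ ≤ ((k:ℝ)+1) * Bt θ t k := by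
          nlinarith [(Bt_pos t hθ k).le, Nat.cast_nonneg (α := ℝ) k]
      _ = Bb θ t k := rfl
  have habs2 : Summable (fun p : ℕ × ℕ => |dTerm θ t (p.2+1) p.1|) := by
    refine (summable_prod_of_nonneg (fun p => abs_nonneg _)).2 ⟨fun k => hfib k, ?_⟩
    exact (summable_Bb hθ ht).of_nonneg_of_le
      (fun k => tsum_nonneg fun m => abs_nonneg _) hfibsum
  have habs1 : Summable (fun p : ℕ × ℕ => |dTerm θ t (p.1+1) p.2|) :=
    (Equiv.prodComm ℕ ℕ).summable_iff.mpr habs2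
  have huncurry : Summable (Function.uncurry (fun m k => dTerm θ t (m+1) k)) :=
    summable_abs_iff.1 habs1
  have hmarg : Summable (fun m : ℕ => ∑' k : ℕ, |dTerm θ t (m+1) k|) :=
    ((summable_prod_of_nonneg (fun p => abs_nonneg _)).1 habs1).2
  have hdFVsucc : Summable (fun m : ℕ => dFV θ t (m+1)) := by
    refine Summable.of_norm_bounded hmarg (fun m => ?_)
    rw [dFV, if_neg (Nat.succ_ne_zero m)]
    have hs : Summable fun k : ℕ => ‖dTerm θ t (m+1) k‖ := by
      simpa [Real.norm_eq_abs] using part1 (m+1) (by omega)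
    simpa [Real.norm_eq_abs] using norm_tsum_le_tsum_norm hs
  have hsum_dFV : Summable (dFV θ t) := (summable_nat_add_iff 1).1 hdFVsucc
  have hrow : ∀ k, ∑' m : ℕ, dTerm θ t (m+1) k = dTerm0 θ t k := by
    intro k
    rw [tsum_eq_sum (s := Finset.range k) (fun m hm => hvan k m (by simpa using hm))]
    exact sumIdent θ t k
  have hswap : ∑' m : ℕ, dFV θ t (m+1) = ∑' k : ℕ, dTerm0 θ t k := by
    calc ∑' m : ℕ, dFV θ t (m+1)
        = ∑' m : ℕ, ∑' k : ℕ, dTerm θ t (m+1) k :=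
          tsum_congr fun m => by rw [dFV, if_neg (Nat.succ_ne_zero m)]
      _ = ∑' k : ℕ, ∑' m : ℕ, dTerm θ t (m+1) k := (Summable.tsum_comm huncurry).symm
      _ = ∑' k : ℕ, dTerm0 θ t k := tsum_congr hrow
  refine ⟨part1, part2, hsum_dFV, ?_⟩
  rw [Summable.tsum_eq_zero_add hsum_dFV]
  have h0 : dFV θ t 0 = 1 - ∑' k : ℕ, dTerm0 θ t k := by rw [dFV, if_pos rfl]
  rw [h0, hswap]
  ring
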